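/- Let f(z) = R(z) − conj(z) with R rational of degree ≥ 2, let z₀ ∈ ℂ, and let z_k be a regular (non-singular) zero of f with z_k ≠ z₀. Then there exists r > 0 and ε₀ > 0 such that for all 0 < ε < ε₀, the perturbed function F(z) = f(z) + ε/(z − z₀) has exactly one zero in the open disk D(z_k, r), and this zero has the same Poincaré index as z_k has for f. -/

import Mathlib

open Polynomial

open Complex Metric


noncomputable def pertL (a c : ℂ) : (ℝ × ℂ) →ₗ[ℝ] (ℝ × ℂ) where
  toFun w := (w.1, c * (w.1 : ℂ) + (a * w.2 - (starRingEnd ℂ) w.2))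
  map_add' u v := by
    simp only [Prod.fst_add, Prod.snd_add, map_add, Prod.mk_add_mk, Prod.mk.injEq]
    push_cast
    exact ⟨by trivial, by ring⟩
  map_smul' r w := by
    simp only [Prod.smul_fst, Prod.smul_snd, smul_eq_mul, RingHom.id_apply, Prod.smul_mk,
      Complex.real_smul, Prod.mk.injEq]
    push_cast
    simp only [map_mul, Complex.conj_ofReal]
    exact ⟨by trivial, by ring⟩

theorem pertL_apply (a c : ℂ) (w : ℝ × ℂ) :
    pertL a c w = (w.1, c * (w.1 : ℂ) + (a * w.2 - (starRingEnd ℂ) w.2)) := rfl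

noncomputable def pertL' (a c : ℂ) (s : ℝ) : (ℝ × ℂ) →ₗ[ℝ] (ℝ × ℂ) where
  toFun w := (w.1, ((starRingEnd ℂ) a * (w.2 - c * (w.1:ℂ)) + (starRingEnd ℂ) (w.2 - c * (w.1:ℂ))) / (s:ℂ))
  map_add' u v := by
    simp only [Prod.fst_add, Prod.snd_add, Prod.mk_add_mk, Prod.mk.injEq]
    push_cast
    simp only [map_add, map_sub, map_mul, Complex.conj_ofReal]
    exact ⟨by trivial, by ring⟩
  map_smul' r w := by
    simp only [Prod.smul_fst, Prod.smul_snd, smul_eq_mul, RingHom.id_apply, Prod.smul_mk,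
      Complex.real_smul, Prod.mk.injEq]
    push_cast
    simp only [map_add, map_sub, map_mul, Complex.conj_ofReal]
    exact ⟨by trivial, by ring⟩

theorem pertL'_apply (a c : ℂ) (s : ℝ) (w : ℝ × ℂ) :
    pertL' a c s w = (w.1, ((starRingEnd ℂ) a * (w.2 - c * (w.1:ℂ)) + (starRingEnd ℂ) (w.2 - c * (w.1:ℂ))) / (s:ℂ)) := rfl

noncomputable def pertEquiv (a c : ℂ) (ha : ‖a‖ ≠ 1) : (ℝ × ℂ) ≃L[ℝ] (ℝ × ℂ) := by
  have hs : ((Complex.normSq a - 1 : ℝ) : ℂ) ≠ 0 := by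
    rw [Complex.ofReal_ne_zero, sub_ne_zero]
    intro h
    apply ha
    rw [← Complex.sq_norm] at h
    nlinarith [norm_nonneg a]
  refine (LinearEquiv.ofLinear (pertL a c) (pertL' a c (Complex.normSq a - 1)) ?_ ?_).toContinuousLinearEquiv
  · refine LinearMap.ext fun w => ?_
    simp only [LinearMap.comp_apply, pertL_apply, pertL'_apply, LinearMap.id_apply]
    refine Prod.ext rfl ?_
    have hs' : ((Complex.normSq a : ℂ) - 1) ≠ 0 := by push_cast at hs; exact hs
    simp only [map_div₀, map_add, map_sub, map_mul, Complex.conj_conj, Complex.conj_ofReal]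
    push_cast
    field_simp [hs']
    linear_combination (w.2 - c * (w.1:ℂ)) * Complex.mul_conj a
  · refine LinearMap.ext fun w => ?_
    simp only [LinearMap.comp_apply, pertL_apply, pertL'_apply, LinearMap.id_apply]
    refine Prod.ext rfl ?_
    have hs' : ((Complex.normSq a : ℂ) - 1) ≠ 0 := by push_cast at hs; exact hs
    simp only [pertL_apply]
    push_cast
    field_simp [hs']
    simp only [map_add, map_sub, map_mul, Complex.conj_conj, Complex.conj_ofReal]
    linear_combination w.2 * Complex.mul_conj a

theorem pertEquiv_apply (a c : ℂ) (ha : ‖a‖ ≠ 1) (w : ℝ × ℂ) :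
    pertEquiv a c ha w = (w.1, c * (w.1 : ℂ) + (a * w.2 - (starRingEnd ℂ) w.2)) := rfl


theorem pert_strict (p q : Polynomial ℂ) (z₀ zk : ℂ) (hqzk : q.eval zk ≠ 0) (hne : zk ≠ z₀)
    (ha : ‖deriv (fun z => p.eval z / q.eval z) zk‖ ≠ 1) :
    HasStrictFDerivAt
      (fun w : ℝ × ℂ => (w.1, eval w.2 p / eval w.2 q + (w.1 : ℂ) / (w.2 - z₀) - (starRingEnd ℂ) w.2))
      ((pertEquiv (deriv (fun z => p.eval z / q.eval z) zk) (zk - z₀)⁻¹ ha :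
        (ℝ × ℂ) ≃L[ℝ] (ℝ × ℂ)) : (ℝ × ℂ) →L[ℝ] (ℝ × ℂ)) (0, zk) := by
  set a := deriv (fun z => p.eval z / q.eval z) zk with hadef
  have hzz : zk - z₀ ≠ 0 := sub_ne_zero.mpr hne
  have h0 := (p.hasStrictDerivAt zk).div (q.hasStrictDerivAt zk) hqzk
  have hR : HasStrictDerivAt (fun z => p.eval z / q.eval z) a zk := by
    rw [hadef, show (fun z => p.eval z / q.eval z) = (fun x => eval x p) / (fun x => eval x q) from rfl, h0.hasDerivAt.deriv]
    exact h0
  have h1 : HasStrictFDerivAt (fun w : ℝ × ℂ => eval w.2 p / eval w.2 q)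
      ((((1 : ℂ →L[ℂ] ℂ).smulRight a).restrictScalars ℝ).comp (ContinuousLinearMap.snd ℝ ℝ ℂ))
      ((0 : ℝ), zk) :=
    (hR.hasStrictFDerivAt.restrictScalars ℝ).comp ((0 : ℝ), zk) (hasStrictFDerivAt_snd (𝕜 := ℝ) (p := ((0 : ℝ), zk)))
  have ha' : HasStrictFDerivAt (fun w : ℝ × ℂ => (w.1 : ℂ))
      (Complex.ofRealCLM.comp (ContinuousLinearMap.fst ℝ ℝ ℂ)) ((0 : ℝ), zk) :=
    (Complex.ofRealCLM.comp (ContinuousLinearMap.fst ℝ ℝ ℂ)).hasStrictFDerivAt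
  have hb : HasStrictFDerivAt (fun w : ℝ × ℂ => (w.2 - z₀)⁻¹)
      ((-((ContinuousLinearMap.mulLeftRight ℝ ℂ) (zk - z₀)⁻¹) (zk - z₀)⁻¹).comp
        (ContinuousLinearMap.snd ℝ ℝ ℂ)) ((0 : ℝ), zk) :=
    (hasStrictFDerivAt_inv' hzz).comp ((0 : ℝ), zk) (hasStrictFDerivAt_snd.sub_const z₀)
  have h2 := ha'.mul' hb
  have h3 : HasStrictFDerivAt (fun w : ℝ × ℂ => (starRingEnd ℂ) w.2)
      ((Complex.conjCLE : ℂ →L[ℝ] ℂ).comp (ContinuousLinearMap.snd ℝ ℝ ℂ)) ((0 : ℝ), zk) :=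
    ((Complex.conjCLE : ℂ →L[ℝ] ℂ).comp (ContinuousLinearMap.snd ℝ ℝ ℂ)).hasStrictFDerivAt
  have hG := (h1.add h2).sub h3
  have hΦ := hasStrictFDerivAt_fst.prodMk hG
  have hfun : (fun w : ℝ × ℂ => (w.1, eval w.2 p / eval w.2 q + (w.1 : ℂ) / (w.2 - z₀) - (starRingEnd ℂ) w.2))
      = fun w : ℝ × ℂ => (w.1, eval w.2 p / eval w.2 q + (w.1 : ℂ) * (w.2 - z₀)⁻¹ - (starRingEnd ℂ) w.2) := by
    funext w; simp only [div_eq_mul_inv]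
  rw [hfun]
  refine hΦ.congr_fderiv ?_
  symm
  refine ContinuousLinearMap.ext fun w => ?_
  simp only [ContinuousLinearEquiv.coe_coe, pertEquiv_apply, ContinuousLinearMap.prod_apply,
    ContinuousLinearMap.coe_comp', ContinuousLinearMap.coe_fst', ContinuousLinearMap.coe_snd',
    Function.comp_apply, ContinuousLinearMap.add_apply, ContinuousLinearMap.sub_apply,
    ContinuousLinearMap.coe_restrictScalars', ContinuousLinearMap.smulRight_apply,
    ContinuousLinearMap.one_apply, ContinuousLinearMap.smul_apply, smul_eq_mul,
    Complex.ofRealCLM_apply, Complex.conjCLE_apply, Complex.ofReal_zero, zero_mul, zero_smul,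
    zero_add, Prod.mk.injEq]
  constructor
  · trivial
  · push_cast
    simp only [op_smul_eq_mul, ← div_eq_mul_inv, ← hadef]
    ring

/-- Perturbation away from the pole: if `z_k ≠ z₀` is a regular zero of
`f(z) = R(z) − conj z` (with `R = p/q` rational of degree ≥ 2), then there is a disk
`D(z_k, r)` in which, for all sufficiently small `ε > 0`, the perturbed function
`F(z) = f(z) + ε/(z − z₀)` has exactly one zero, and this zero has the same Poincaré
index as `z_k` (i.e. it is sense-preserving iff `z_k` is, sense-reversing iff `z_k` is). -/
theorem perturbed_zero_survives (p q : Polynomial ℂ) (hq : q ≠ 0) (hcop : IsCoprime p q)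
    (hdeg : 2 ≤ max p.natDegree q.natDegree) (z₀ zk : ℂ) (hne : zk ≠ z₀)
    (hqzk : q.eval zk ≠ 0)
    (hzero : p.eval zk / q.eval zk - (starRingEnd ℂ) zk = 0)
    (hreg : ‖deriv (fun z => p.eval z / q.eval z) zk‖ ≠ 1) :
    ∃ r > 0, ∃ ε₀ > 0, ∀ ε : ℝ, 0 < ε → ε < ε₀ →
      (∃! z : ℂ, z ∈ Metric.ball zk r ∧ q.eval z ≠ 0 ∧ z ≠ z₀ ∧
        p.eval z / q.eval z + (ε : ℂ) / (z - z₀) - (starRingEnd ℂ) z = 0) ∧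
      ∀ z ∈ Metric.ball zk r, q.eval z ≠ 0 → z ≠ z₀ →
        p.eval z / q.eval z + (ε : ℂ) / (z - z₀) - (starRingEnd ℂ) z = 0 →
        ((1 < ‖deriv (fun w => p.eval w / q.eval w) zk‖ →
            1 < ‖deriv (fun w => p.eval w / q.eval w + (ε : ℂ) / (w - z₀)) z‖) ∧
         (‖deriv (fun w => p.eval w / q.eval w) zk‖ < 1 →
            ‖deriv (fun w => p.eval w / q.eval w + (ε : ℂ) / (w - z₀)) z‖ < 1)) := by
  have hΦs := pert_strict p q z₀ zk hqzk hne hreg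
  set a := deriv (fun z => p.eval z / q.eval z) zk with hadef
  set Φ : ℝ × ℂ → ℝ × ℂ :=
    fun w => (w.1, eval w.2 p / eval w.2 q + (w.1 : ℂ) / (w.2 - z₀) - (starRingEnd ℂ) w.2) with hΦdef
  set Ψ := hΦs.toOpenPartialHomeomorph Φ with hΨdef
  have hcoe : ⇑Ψ = Φ := hΦs.toOpenPartialHomeomorph_coe
  have hmem : ((0 : ℝ), zk) ∈ Ψ.source := hΦs.mem_toOpenPartialHomeomorph_source
  have hΦ0 : Φ ((0 : ℝ), zk) = (0, 0) := by
    simp only [hΦdef, Complex.ofReal_zero, zero_div, add_zero]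
    exact Prod.ext rfl hzero
  have himage : ((0 : ℝ), (0 : ℂ)) ∈ Ψ.target := by
    have := Ψ.map_source hmem
    rwa [hcoe, hΦ0] at this
  -- radius inside the source
  obtain ⟨ρ, hρ, hρsub⟩ := Metric.mem_nhds_iff.mp (Ψ.open_source.mem_nhds hmem)
  -- derivative function of R
  set Rd : ℂ → ℂ := fun z =>
    (eval z (derivative p) * eval z q - eval z p * eval z (derivative q)) / (eval z q) ^ 2
    with hRddef
  have hderiv : ∀ z : ℂ, eval z q ≠ 0 → deriv (fun w => eval w p / eval w q) z = Rd z :=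
    fun z hz => ((p.hasDerivAt z).div (q.hasDerivAt z) hz).deriv
  have hazk : a = Rd zk := hderiv zk hqzk
  set η := |‖a‖ - 1| with hηdef
  have hη : 0 < η := abs_pos.mpr (sub_ne_zero.mpr hreg)
  have hRdc : ContinuousAt Rd zk := by
    apply ContinuousAt.div
    · exact (((derivative p).continuous.mul q.continuous).sub
        (p.continuous.mul (derivative q).continuous)).continuousAt
    · exact (q.continuous.pow 2).continuousAt
    · exact pow_ne_zero 2 hqzk
  have hev1 : ∀ᶠ z in nhds zk, eval z q ≠ 0 := q.continuous.continuousAt.eventually_ne hqzk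
  have hev2 : ∀ᶠ z in nhds zk, ‖Rd z - Rd zk‖ < η / 2 := by
    have hc : ContinuousAt (fun z => ‖Rd z - Rd zk‖) zk :=
      (continuous_norm.continuousAt).comp (hRdc.sub continuousAt_const)
    have h0 : ‖Rd zk - Rd zk‖ = 0 := by simp
    have := hc (Iio_mem_nhds (show ‖Rd zk - Rd zk‖ < η / 2 by rw [h0]; positivity))
    exact this
  obtain ⟨r1, hr1pos, hr1⟩ := Metric.eventually_nhds_iff.mp (hev1.and hev2)
  set rz := dist zk z₀ / 2 with hrzdef
  have hrz : 0 < rz := by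
    have := dist_pos.mpr hne
    positivity
  set r := min (min r1 ρ) rz with hrdef
  have hr : 0 < r := lt_min (lt_min hr1pos hρ) hrz
  -- eventual facts in ε
  have hj : Continuous (fun ε : ℝ => ((ε, 0) : ℝ × ℂ)) := continuous_id.prodMk continuous_const
  have hsymm0 : Ψ.symm ((0 : ℝ), (0 : ℂ)) = ((0 : ℝ), zk) := by
    have := Ψ.left_inv hmem
    rwa [hcoe, hΦ0] at this
  have hev3 : ∀ᶠ ε : ℝ in nhds 0, ((ε, 0) : ℝ × ℂ) ∈ Ψ.target :=
    hj.continuousAt (Ψ.open_target.mem_nhds himage)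
  have hev4 : ∀ᶠ ε : ℝ in nhds 0, Ψ.symm ((ε, 0) : ℝ × ℂ) ∈ Metric.ball ((0 : ℝ), zk) r := by
    have hsc : ContinuousAt Ψ.symm ((0 : ℝ), (0 : ℂ)) :=
      Ψ.continuousAt_symm himage
    have htend : Filter.Tendsto (fun ε : ℝ => Ψ.symm ((ε, 0) : ℝ × ℂ)) (nhds 0)
        (nhds ((0 : ℝ), zk)) := by
      rw [← hsymm0]
      exact hsc.tendsto.comp (hj.continuousAt)
    exact htend (Metric.ball_mem_nhds _ hr)
  obtain ⟨ε₁, hε₁pos, hε₁⟩ := Metric.eventually_nhds_iff.mp (hev3.and hev4)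
  refine ⟨r, hr, min (min ε₁ ρ) (η * rz ^ 2 / 2), by positivity, ?_⟩
  intro ε hεpos hεlt
  have hεε₁ : |ε| < ε₁ := by
    rw [abs_of_pos hεpos]
    exact hεlt.trans_le ((min_le_left _ _).trans (min_le_left _ _))
  have hερ : ε < ρ := hεlt.trans_le ((min_le_left _ _).trans (min_le_right _ _))
  have hεη : ε < η * rz ^ 2 / 2 := hεlt.trans_le (min_le_right _ _)
  obtain ⟨htar, hball⟩ := hε₁ (show dist ε (0:ℝ) < ε₁ by rwa [Real.dist_eq, sub_zero])
  set w := Ψ.symm ((ε, 0) : ℝ × ℂ) with hwdef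
  have hΦw : Φ w = (ε, 0) := by
    have := Ψ.right_inv htar
    rwa [hcoe] at this
  have hw1 : w.1 = ε := congrArg Prod.fst hΦw
  set z := w.2 with hzdef
  have hwz : w = (ε, z) := Prod.ext hw1 rfl
  have hzball : z ∈ Metric.ball zk r := by
    have : dist w ((0 : ℝ), zk) < r := hball
    rw [Prod.dist_eq] at this
    exact lt_of_le_of_lt (le_max_right _ _) this
  -- generic facts for any point of the ball
  have hball_facts : ∀ y ∈ Metric.ball zk r, eval y q ≠ 0 ∧ y ≠ z₀ ∧
      ‖Rd y - Rd zk‖ < η / 2 ∧ rz < ‖y - z₀‖ := by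
    intro y hy
    have hd : dist y zk < r := hy
    have h1 := hr1 (hd.trans_le ((min_le_left _ _).trans (min_le_left _ _)))
    have hdz : dist y zk < rz := hd.trans_le (min_le_right _ _)
    have habs : rz < ‖y - z₀‖ := by
      have h2 : dist zk z₀ ≤ dist zk y + dist y z₀ := dist_triangle _ _ _
      have : dist y z₀ = ‖y - z₀‖ := Complex.dist_eq y z₀
      rw [dist_comm] at hdz
      rw [hrzdef] at hdz ⊢
      linarith [this ▸ h2]
    refine ⟨h1.1, ?_, h1.2, habs⟩
    intro hyz
    rw [hyz] at habs
    simp at habs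
    linarith [hrz, habs]
  -- the zero equation for z
  have hG0 : eval z p / eval z q + (ε : ℂ) / (z - z₀) - (starRingEnd ℂ) z = 0 := by
    have := congrArg Prod.snd hΦw
    rw [hwz] at this
    exact this
  obtain ⟨hqz, hzz₀, _, _⟩ := hball_facts z hzball
  constructor
  · refine ⟨z, ⟨hzball, hqz, hzz₀, hG0⟩, ?_⟩
    rintro z' ⟨hz'ball, hqz', hz'z₀, heq'⟩
    have hsrc' : ((ε, z') : ℝ × ℂ) ∈ Ψ.source := by
      apply hρsub
      rw [Metric.mem_ball, Prod.dist_eq]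
      refine max_lt ?_ ?_
      · rwa [Real.dist_eq, sub_zero, abs_of_pos hεpos]
      · exact (Metric.mem_ball.mp hz'ball).trans_le ((min_le_left _ _).trans (min_le_right _ _))
    have hsrc : w ∈ Ψ.source := Ψ.map_target htar
    have hΦ' : Φ (ε, z') = (ε, 0) := Prod.ext rfl heq'
    have : ((ε, z') : ℝ × ℂ) = w := by
      apply Ψ.injOn hsrc' hsrc
      rw [hcoe, hΦ', hΦw]
    rw [hwz] at this
    exact congrArg Prod.snd this
  · intro y hy hqy hyz₀ _
    obtain ⟨_, _, hRdy, habsy⟩ := hball_facts y hy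
    have hyz : (y - z₀) ≠ 0 := sub_ne_zero.mpr hyz₀
    have hdF : deriv (fun x => eval x p / eval x q + (ε : ℂ) / (x - z₀)) y
        = Rd y - (ε : ℂ) / (y - z₀) ^ 2 := by
      have h1 := (p.hasDerivAt y).div (q.hasDerivAt y) hqy
      have h2 := (hasDerivAt_const y ((ε : ℝ) : ℂ)).div ((hasDerivAt_id' y).sub_const z₀) hyz
      rw [show (fun x => eval x p / eval x q + (ε : ℂ) / (x - z₀)) = ((fun x => eval x p) / fun x => eval x q) + ((fun x => (ε : ℂ)) / fun x => x - z₀) from rfl, (h1.add h2).deriv, hRddef]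
      ring
    rw [hdF]
    set D := Rd y - (ε : ℂ) / (y - z₀) ^ 2 with hDdef
    have hab2 : ‖(ε : ℂ) / (y - z₀) ^ 2‖ < η / 2 := by
      rw [norm_div, norm_pow, Complex.norm_real, Real.norm_eq_abs, abs_of_pos hεpos]
      rw [div_lt_iff₀ (pow_pos (hrz.trans habsy) 2)]
      have hsq : rz ^ 2 < (‖y - z₀‖) ^ 2 := by nlinarith
      nlinarith
    have htotal : ‖D - Rd zk‖ < η := by
      have h3 : D - Rd zk = (Rd y - Rd zk) + (-((ε : ℂ) / (y - z₀) ^ 2)) := by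
        rw [hDdef]; ring
      rw [h3]
      calc ‖_‖ ≤ ‖Rd y - Rd zk‖ + ‖-((ε:ℂ)/(y - z₀)^2)‖ :=
            norm_add_le _ _
        _ < η / 2 + η / 2 := by
            rw [norm_neg]; exact add_lt_add hRdy hab2
        _ = η := by ring
    have key : ∀ u v : ℂ, ‖u - v‖ < η → ‖u‖ < ‖v‖ + η := by
      intro u v h
      have h1 : ‖u‖ - ‖v‖ ≤ ‖u - v‖ := by
        simpa using norm_sub_norm_le u v
      linarith
    have htri1 : ‖Rd zk‖ < ‖D‖ + η :=
      key _ _ (by rwa [norm_sub_rev] at htotal)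
    have htri2 : ‖D‖ < ‖Rd zk‖ + η := key _ _ htotal
    rw [← hazk] at htri1 htri2
    constructor
    · intro hgt
      have hval : η = ‖a‖ - 1 := by
        rw [hηdef]; exact abs_of_pos (by linarith)
      linarith
    · intro hlt
      have hval : η = 1 - ‖a‖ := by
        rw [hηdef, abs_of_neg (show ‖a‖ - 1 < 0 by linarith)]; ring
      linarith
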